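/- Let X be uniform on B_1^n (n ≥ 2) and let θ ∈ ℝ^n be a unit vector. Then E⟨θ,X⟩⁴ = 3·E[X_1²X_2²] + (E[X_1⁴] − 3·E[X_1²X_2²])·Σ_i θ_i⁴, and the coefficient E[X_1⁴] − 3·E[X_1²X_2²] = 12/((n+1)(n+2)(n+3)(n+4)) is strictly positive. -/

import Mathlib

open MeasureTheory Pointwise

lemma betaNat (b a : ℕ) :
    ∫ x in (0:ℝ)..1, x ^ a * (1 - x) ^ b
      = (Nat.factorial a : ℝ) * (Nat.factorial b) / (Nat.factorial (a + b + 1)) := by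
  induction b generalizing a with
  | zero =>
    simp only [pow_zero, mul_one, integral_pow, one_pow, Nat.factorial_zero, Nat.cast_one,
      Nat.add_zero, Nat.factorial_succ]
    rw [zero_pow (by omega), sub_zero]
    have : (a.factorial : ℝ) ≠ 0 := by positivity
    push_cast
    field_simp
  | succ b ih =>
    have hF : ∀ x ∈ Set.uIcc (0:ℝ) 1, HasDerivAt (fun x : ℝ => x ^ (a+1) * (1-x) ^ (b+1))
        ((a+1:ℝ) * (x ^ a * (1-x)^(b+1)) - (b+1:ℝ) * (x ^ (a+1) * (1-x)^b)) x := by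
      intro x _
      have h1 : HasDerivAt (fun x : ℝ => x ^ (a+1)) ((a+1:ℝ) * x ^ a) x := by
        simpa using hasDerivAt_pow (a+1) x
      have h2 : HasDerivAt (fun x : ℝ => (1-x) ^ (b+1)) (-((b+1:ℝ) * (1-x) ^ b)) x := by
        have h3 : HasDerivAt (fun x : ℝ => 1 - x) (-1) x := by
          simpa using (hasDerivAt_id x).const_sub (1:ℝ)
        have := (hasDerivAt_pow (b+1) (1-x)).comp x h3
        simpa [Function.comp_def, mul_comm, mul_left_comm, mul_assoc] using this
      have := h1.mul h2
      exact this.congr_deriv (by push_cast; ring)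
    have hint : IntervalIntegrable (fun x : ℝ =>
        (a+1:ℝ) * (x ^ a * (1-x)^(b+1)) - (b+1:ℝ) * (x ^ (a+1) * (1-x)^b)) volume 0 1 :=
      (Continuous.intervalIntegrable (by continuity)) 0 1
    have h0 := intervalIntegral.integral_eq_sub_of_hasDerivAt hF hint
    rw [intervalIntegral.integral_sub
        ((Continuous.intervalIntegrable (by continuity : Continuous fun x : ℝ => (a+1:ℝ) * (x ^ a * (1-x)^(b+1)))) 0 1)
        ((Continuous.intervalIntegrable (by continuity : Continuous fun x : ℝ => (b+1:ℝ) * (x ^ (a+1) * (1-x)^b))) 0 1),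
      intervalIntegral.integral_const_mul, intervalIntegral.integral_const_mul] at h0
    have hval : (1:ℝ) ^ (a+1) * (1-1)^(b+1) - 0 ^ (a+1) * (1-0)^(b+1) = 0 := by
      rw [zero_pow (by omega)]; norm_num
    rw [hval] at h0
    have ha : (a+1:ℝ) ≠ 0 := by positivity
    have h1 : ∫ x in (0:ℝ)..1, x ^ a * (1-x)^(b+1)
        = ((b+1:ℝ)/(a+1:ℝ)) * ∫ x in (0:ℝ)..1, x ^ (a+1) * (1-x)^b := by
      field_simp
      linarith [h0]
    rw [h1, ih (a+1)]
    rw [Nat.factorial_succ b, Nat.factorial_succ a]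
    have heq : a + 1 + b + 1 = a + (b + 1) + 1 := by omega
    rw [heq]
    have hfac : ((a + (b+1) + 1).factorial : ℝ) ≠ 0 := by positivity
    have hfacb : ((b.factorial : ℝ)) ≠ 0 := by positivity
    push_cast
    field_simp

lemma oneDim (p m : ℕ) :
    ∫ t : ℝ, (if |t| ≤ 1 then |t| ^ p * (1 - |t|) ^ m else 0)
      = 2 * ((Nat.factorial p : ℝ) * (Nat.factorial m) / (Nat.factorial (p + m + 1))) := by
  have h1 : (fun t : ℝ => if |t| ≤ 1 then |t| ^ p * (1 - |t|) ^ m else 0)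
      = Set.indicator (Set.Icc (-1:ℝ) 1) (fun t => |t| ^ p * (1 - |t|) ^ m) := by
    funext t
    rw [Set.indicator_apply]
    congr 1
    simp [abs_le, Set.mem_Icc]
  rw [h1, integral_indicator measurableSet_Icc, integral_Icc_eq_integral_Ioc,
    ← intervalIntegral.integral_of_le (by norm_num : (-1:ℝ) ≤ 1)]
  have hcont : Continuous fun t : ℝ => |t| ^ p * (1 - |t|) ^ m := by continuity
  rw [← intervalIntegral.integral_add_adjacent_intervals
    (b := (0:ℝ)) (hcont.intervalIntegrable _ _) (hcont.intervalIntegrable _ _)]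
  have hneg : ∫ t in (-1:ℝ)..0, |t| ^ p * (1 - |t|) ^ m
      = ∫ t in (0:ℝ)..1, |t| ^ p * (1 - |t|) ^ m := by
    rw [show (-1:ℝ) = -(1:ℝ) by norm_num, show (0:ℝ) = -(0:ℝ) by norm_num,
      ← intervalIntegral.integral_comp_neg (fun t => |t| ^ p * (1 - |t|) ^ m)]
    simp [abs_neg]
  have hpos : ∫ t in (0:ℝ)..1, |t| ^ p * (1 - |t|) ^ m
      = ∫ t in (0:ℝ)..1, t ^ p * (1 - t) ^ m := by
    apply intervalIntegral.integral_congr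
    intro t ht
    rw [Set.uIcc_of_le (by norm_num : (0:ℝ) ≤ 1)] at ht
    simp only []; rw [abs_of_nonneg ht.1]
  rw [hneg, hpos, betaNat]
  ring

def Bset (n : ℕ) (r : ℝ) : Set (Fin n → ℝ) := {x | ∑ i, |x i| ≤ r}

lemma measurableSet_Bset (n : ℕ) (r : ℝ) : MeasurableSet (Bset n r) := by
  have : IsClosed (Bset n r) :=
    isClosed_le (by continuity) continuous_const
  exact this.measurableSet

lemma isCompact_Bset (n : ℕ) (r : ℝ) : IsCompact (Bset n r) := by
  apply Metric.isCompact_of_isClosed_isBounded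
  · exact isClosed_le (by continuity) continuous_const
  · rw [isBounded_iff_forall_norm_le]
    refine ⟨|r|, fun x hx => ?_⟩
    rw [pi_norm_le_iff_of_nonneg (abs_nonneg r)]
    intro i
    calc ‖x i‖ = |x i| := rfl
    _ ≤ ∑ j, |x j| := Finset.single_le_sum (fun j _ => abs_nonneg (x j)) (Finset.mem_univ i)
    _ ≤ r := hx
    _ ≤ |r| := le_abs_self r

lemma integrableOn_Bset {n : ℕ} {f : (Fin n → ℝ) → ℝ} (hf : Continuous f) (r : ℝ) :
    IntegrableOn f (Bset n r) volume :=
  hf.continuousOn.integrableOn_compact (isCompact_Bset n r)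

lemma Bset_empty {n : ℕ} {r : ℝ} (hr : r < 0) : Bset n r = ∅ := by
  ext x
  simp only [Bset, Set.mem_setOf_eq, Set.mem_empty_iff_false, iff_false, not_le]
  exact lt_of_lt_of_le hr (Finset.sum_nonneg fun i _ => abs_nonneg (x i))

lemma smul_Bset {n : ℕ} {r : ℝ} (hr : 0 < r) : r • Bset n 1 = Bset n r := by
  ext y
  rw [Set.mem_smul_set_iff_inv_smul_mem₀ hr.ne']
  simp only [Bset, Set.mem_setOf_eq, Pi.smul_apply, smul_eq_mul, abs_mul, abs_inv,
    abs_of_pos hr, ← Finset.mul_sum]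
  rw [inv_mul_le_iff₀ hr, mul_one]

lemma Bset_scaling (n : ℕ) (q : Fin n → ℕ) {r : ℝ} (hr : 0 < r) :
    ∫ y in Bset n r, ∏ i, |y i| ^ q i
      = r ^ (n + ∑ i, q i) * ∫ y in Bset n 1, ∏ i, |y i| ^ q i := by
  have hfin : Module.finrank ℝ (Fin n → ℝ) = n := by simp
  have h := MeasureTheory.Measure.setIntegral_comp_smul_of_pos (μ := volume)
    (fun y : Fin n → ℝ => ∏ i, |y i| ^ q i) (Bset n 1) hr
  rw [hfin, smul_Bset hr] at h
  have h2 : ∀ y : Fin n → ℝ, (∏ i, |(r • y) i| ^ q i) = r ^ (∑ i, q i) * ∏ i, |y i| ^ q i := by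
    intro y
    rw [← Finset.prod_pow_eq_pow_sum, ← Finset.prod_mul_distrib]
    refine Finset.prod_congr rfl fun i _ => ?_
    simp only [Pi.smul_apply, smul_eq_mul, abs_mul, abs_of_pos hr, mul_pow]
  simp only [h2] at h
  rw [integral_const_mul] at h
  rw [pow_add]
  have hrn : (r ^ n)⁻¹ ≠ 0 := by positivity
  rw [smul_eq_mul] at h
  field_simp at h ⊢
  linarith [h]

lemma lemA : ∀ (n : ℕ) (p : Fin n → ℕ),
    ∫ x in Bset n 1, ∏ i, |x i| ^ p i
      = 2 ^ n * (∏ i, ((p i).factorial : ℝ)) / ((n + ∑ i, p i).factorial : ℝ) := by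
  intro n
  induction n with
  | zero =>
    intro p
    have hB : Bset 0 1 = Set.univ := by
      ext x; simp [Bset]
    rw [hB]
    simp only [Finset.univ_eq_empty, Finset.prod_empty, Finset.sum_empty]
    rw [Measure.restrict_univ, integral_const, smul_eq_mul, mul_one]
    rw [measureReal_def, volume_pi, Measure.pi_univ]
    simp
  | succ n ih =>
    intro p
    set q : Fin n → ℕ := fun i => p ((0 : Fin (n+1)).succAbove i) with hq
    set m : ℕ := n + ∑ i, q i with hm
    set I : ℝ := ∫ y in Bset n 1, ∏ i, |y i| ^ q i with hI
    set e := MeasurableEquiv.piFinSuccAbove (fun _ : Fin (n+1) => ℝ) 0 with he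
    have hMP : MeasurePreserving (⇑e.symm) volume volume :=
      (volume_preserving_piFinSuccAbove (fun _ : Fin (n+1) => ℝ) 0).symm e
    set f : (Fin (n+1) → ℝ) → ℝ := fun x => ∏ i, |x i| ^ p i with hf
    have hfc : Continuous f := by
      apply continuous_finset_prod
      intro i _
      exact ((continuous_apply i).abs).pow (p i)
    have hFint : Integrable ((Bset (n+1) 1).indicator f) volume :=
      (integrable_indicator_iff (measurableSet_Bset _ _)).2 (integrableOn_Bset hfc 1)
    have step1 : ∫ x in Bset (n+1) 1, f x
        = ∫ z : ℝ × (Fin n → ℝ), (Bset (n+1) 1).indicator f (e.symm z) := by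
      rw [← integral_indicator (measurableSet_Bset _ _)]
      exact (hMP.integral_comp e.symm.measurableEmbedding _).symm
    have hGint : Integrable (fun z : ℝ × (Fin n → ℝ) => (Bset (n+1) 1).indicator f (e.symm z))
        volume := (hMP.integrable_comp_emb e.symm.measurableEmbedding).2 hFint
    rw [Measure.volume_eq_prod] at hGint
    have step2 : ∫ z : ℝ × (Fin n → ℝ), (Bset (n+1) 1).indicator f (e.symm z)
        = ∫ t : ℝ, ∫ y : Fin n → ℝ, (Bset (n+1) 1).indicator f (e.symm (t, y)) := by
      rw [Measure.volume_eq_prod]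
      exact integral_prod _ hGint
    have hsymm : ∀ (t : ℝ) (y : Fin n → ℝ), e.symm (t, y) = (0 : Fin (n+1)).insertNth t y := by
      intro t y; rfl
    have inner_eq : ∀ t : ℝ, (fun y : Fin n → ℝ => (Bset (n+1) 1).indicator f (e.symm (t, y)))
        = (Bset n (1 - |t|)).indicator (fun y => |t| ^ p 0 * ∏ i, |y i| ^ q i) := by
      intro t; funext y
      rw [hsymm]
      have hmem : ((0 : Fin (n+1)).insertNth t y ∈ Bset (n+1) 1) ↔ (y ∈ Bset n (1 - |t|)) := by
        simp only [Bset, Set.mem_setOf_eq]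
        rw [Fin.sum_univ_succAbove (fun j => |(0 : Fin (n+1)).insertNth t y j|) 0]
        simp only [Fin.insertNth_apply_same, Fin.insertNth_apply_succAbove]
        constructor <;> intro h <;> linarith
      have hval : f ((0 : Fin (n+1)).insertNth t y) = |t| ^ p 0 * ∏ i, |y i| ^ q i := by
        have hP := Fin.prod_univ_succAbove
          (fun j : Fin (n+1) => |Fin.insertNth (α := fun _ => ℝ) 0 t y j| ^ p j) 0
        rw [hf]
        simp only [] at hP ⊢
        rw [hP]
        simp only [Fin.insertNth_apply_same, Fin.insertNth_apply_succAbove, hq]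
      by_cases hy : y ∈ Bset n (1 - |t|)
      · rw [Set.indicator_of_mem (hmem.2 hy), Set.indicator_of_mem hy, hval]
      · rw [Set.indicator_of_notMem (fun hc => hy (hmem.1 hc)), Set.indicator_of_notMem hy]
    have inner_val : ∀ t : ℝ, (∫ y : Fin n → ℝ, (Bset (n+1) 1).indicator f (e.symm (t, y)))
        = |t| ^ p 0 * ∫ y in Bset n (1 - |t|), ∏ i, |y i| ^ q i := by
      intro t
      rw [inner_eq t, integral_indicator (measurableSet_Bset _ _), integral_const_mul]
    have hae : (fun t : ℝ => |t| ^ p 0 * ∫ y in Bset n (1 - |t|), ∏ i, |y i| ^ q i)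
        =ᵐ[volume] (fun t : ℝ => (if |t| ≤ 1 then |t| ^ p 0 * (1 - |t|) ^ m else 0) * I) := by
      have hct : ({-1, 1} : Set ℝ).Countable := (Set.finite_singleton (1:ℝ)).insert (-1) |>.countable
      filter_upwards [hct.ae_notMem volume] with t ht
      by_cases h1 : |t| < 1
      · have hr : 0 < 1 - |t| := by linarith
        rw [Bset_scaling n q hr, if_pos h1.le, ← hm, ← hI]
        ring
      · have h2 : 1 < |t| := by
          rcases lt_or_eq_of_le (not_lt.1 h1) with h | h
          · exact h
          · exfalso
            rcases (abs_eq (by norm_num : (0:ℝ) ≤ 1)).1 h.symm with h | h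
            · exact ht (by simp [h])
            · exact ht (by simp [h])
        rw [Bset_empty (by linarith : 1 - |t| < 0), Measure.restrict_empty,
          integral_zero_measure, if_neg (by linarith), mul_zero, zero_mul]
    calc ∫ x in Bset (n+1) 1, ∏ i, |x i| ^ p i
        = ∫ t : ℝ, ∫ y : Fin n → ℝ, (Bset (n+1) 1).indicator f (e.symm (t, y)) :=
          step1.trans step2
      _ = ∫ t : ℝ, |t| ^ p 0 * ∫ y in Bset n (1 - |t|), ∏ i, |y i| ^ q i := by
          simp only [inner_val]
      _ = ∫ t : ℝ, (if |t| ≤ 1 then |t| ^ p 0 * (1 - |t|) ^ m else 0) * I :=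
          integral_congr_ae hae
      _ = (∫ t : ℝ, if |t| ≤ 1 then |t| ^ p 0 * (1 - |t|) ^ m else 0) * I :=
          integral_mul_const _ _
      _ = (2 * ((Nat.factorial (p 0) : ℝ) * (Nat.factorial m) / (Nat.factorial (p 0 + m + 1)))) * I := by
          rw [oneDim]
      _ = 2 ^ (n+1) * (∏ i, ((p i).factorial : ℝ)) / ((n + 1 + ∑ i, p i).factorial : ℝ) := by
          rw [hI, ih q]
          rw [show (∏ i, ((p i).factorial : ℝ))
              = ((p 0).factorial : ℝ) * ∏ i, ((q i).factorial : ℝ) from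
            Fin.prod_univ_succAbove (fun i => ((p i).factorial : ℝ)) 0]
          rw [show n + 1 + ∑ i, p i = p 0 + m + 1 by
            simp only [hm, hq]
            rw [Fin.sum_univ_succAbove p 0]
            omega]
          rw [← hm]
          have h1 : ((p 0 + m + 1).factorial : ℝ) ≠ 0 := by positivity
          have h2 : ((m).factorial : ℝ) ≠ 0 := by positivity
          field_simp
          ring

lemma flip_zero (n : ℕ) (p : Fin n → ℕ) (r : Fin n) (hodd : Odd (p r)) :
    ∫ x in Bset n 1, ∏ i, (x i) ^ p i = 0 := by
  classical
  set f : Fin n → ℝ → ℝ := fun i => if i = r then (fun t => -t) else id with hfdef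
  set φ : (Fin n → ℝ) → (Fin n → ℝ) := fun a i => f i (a i) with hφdef
  have hφ : MeasurePreserving φ volume volume := by
    apply volume_preserving_pi
    intro i
    by_cases h : i = r
    · simp only [hfdef, if_pos h]
      exact Measure.measurePreserving_neg volume
    · simp only [hfdef, if_neg h]
      exact MeasurePreserving.id volume
  have hφapp : ∀ (a : Fin n → ℝ) (i : Fin n), φ a i = if i = r then -a i else a i := by
    intro a i
    by_cases h : i = r <;> simp [hφdef, hfdef, h]
  have hinv : ∀ a, φ (φ a) = a := by
    intro a; funext i
    by_cases h : i = r <;> simp [hφapp, h]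
  have hemb : MeasurableEmbedding φ := by
    exact MeasurableEquiv.measurableEmbedding
      { toFun := φ, invFun := φ, left_inv := hinv, right_inv := hinv,
        measurable_toFun := hφ.measurable, measurable_invFun := hφ.measurable }
  have hpre : φ ⁻¹' (Bset n 1) = Bset n 1 := by
    ext x
    simp only [Set.mem_preimage, Bset, Set.mem_setOf_eq]
    have : ∀ i, |φ x i| = |x i| := by
      intro i; by_cases h : i = r <;> simp [hφapp, h]
    rw [Finset.sum_congr rfl fun i _ => this i]
  have key := hφ.setIntegral_preimage_emb hemb (fun x => ∏ i, (x i) ^ p i) (Bset n 1)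
  rw [hpre] at key
  have hodd' : ∀ x : Fin n → ℝ, (∏ i, (φ x i) ^ p i) = -∏ i, (x i) ^ p i := by
    intro x
    rw [← Finset.mul_prod_erase Finset.univ _ (Finset.mem_univ r),
      ← Finset.mul_prod_erase Finset.univ (fun i => (x i) ^ p i) (Finset.mem_univ r)]
    have h1 : (φ x r) ^ p r = -((x r) ^ p r) := by
      rw [hφapp, if_pos rfl, hodd.neg_pow]
    rw [h1]
    have h2 : ∀ i ∈ Finset.univ.erase r, (φ x i) ^ p i = (x i) ^ p i := by
      intro i hi
      rw [hφapp, if_neg (Finset.mem_erase.1 hi).1]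
    rw [Finset.prod_congr rfl h2]
    ring
  have : ∫ x in Bset n 1, ∏ i, (x i) ^ p i = -∫ x in Bset n 1, ∏ i, (x i) ^ p i := by
    conv_lhs => rw [← key]
    have : (fun x => ∏ i, (φ x i) ^ p i) = fun x => -∏ i, (x i) ^ p i := funext hodd'
    simp only [this, integral_neg]
  linarith [this]

lemma signed_moment (n : ℕ) (p : Fin n → ℕ) :
    ∫ x in Bset n 1, ∏ i, (x i) ^ p i
      = if ∀ i, Even (p i)
        then 2 ^ n * (∏ i, ((p i).factorial : ℝ)) / ((n + ∑ i, p i).factorial : ℝ)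
        else 0 := by
  by_cases hp : ∀ i, Even (p i)
  · rw [if_pos hp, ← lemA n p]
    apply integral_congr_ae (Filter.Eventually.of_forall fun x => ?_)
    exact Finset.prod_congr rfl fun i _ => ((hp i).pow_abs (x i)).symm
  · rw [if_neg hp]
    push_neg at hp
    obtain ⟨r, hr⟩ := hp
    exact flip_zero n p r (Nat.not_even_iff_odd.1 hr)

lemma vol_Bset (n : ℕ) : (volume (Bset n 1)).toReal = 2 ^ n / (n.factorial : ℝ) := by
  have h := lemA n 0
  simp only [Pi.zero_apply, pow_zero, Finset.prod_const_one, Finset.sum_const_zero,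
    Nat.factorial_zero, Nat.cast_one, mul_one, Nat.add_zero] at h
  rw [setIntegral_const, smul_eq_mul, mul_one] at h
  exact h

lemma quad_vol (n : ℕ) (i : Fin n) :
    ∫ x in Bset n 1, (x i) ^ 4 = 2 ^ n * 24 / (((n + 4).factorial : ℝ)) := by
  have h : ∀ x : Fin n → ℝ, (x i) ^ 4 = ∏ m, (x m) ^ (if m = i then 4 else 0) := by
    intro x
    simp [pow_ite, Finset.prod_ite_eq', pow_zero]
  rw [integral_congr_ae (Filter.Eventually.of_forall fun x => h x), signed_moment]
  rw [if_pos (by intro m; split <;> decide)]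
  have hs : ∑ m, (if m = i then 4 else 0) = 4 := by
    simp [Finset.sum_ite_eq']
  have hp : (∏ m, (((if m = i then 4 else 0 : ℕ)).factorial : ℝ)) = 24 := by
    simp [apply_ite Nat.factorial, Finset.prod_ite_eq', Nat.factorial]
  rw [hs, hp]

lemma pair_vol (n : ℕ) (i j : Fin n) (hij : i ≠ j) :
    ∫ x in Bset n 1, (x i) ^ 2 * (x j) ^ 2 = 2 ^ n * 4 / (((n + 4).factorial : ℝ)) := by
  set c : Fin n → ℕ := fun m => (if m = i then 2 else 0) + (if m = j then 2 else 0) with hc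
  have h : ∀ x : Fin n → ℝ, (x i) ^ 2 * (x j) ^ 2 = ∏ m, (x m) ^ c m := by
    intro x
    simp only [hc, pow_add, Finset.prod_mul_distrib]
    simp [pow_ite, Finset.prod_ite_eq', pow_zero]
  rw [integral_congr_ae (Filter.Eventually.of_forall fun x => h x), signed_moment]
  rw [if_pos (by intro m; simp only [hc]; split <;> split <;> decide)]
  have hs : ∑ m, c m = 4 := by
    simp [hc, Finset.sum_add_distrib, Finset.sum_ite_eq']
  have hp : (∏ m, ((c m).factorial : ℝ)) = 4 := by
    have : ∀ m, ((c m).factorial : ℝ)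
        = (if m = i then 2 else 1) * (if m = j then 2 else 1) := by
      intro m
      by_cases h1 : m = i <;> by_cases h2 : m = j
      · exact absurd (h1 ▸ h2) hij
      · subst h1; simp [hc, hij, h2, Nat.factorial]
      · subst h2; simp [hc, Ne.symm hij, Nat.factorial]
      · simp [hc, h1, h2]
    rw [Finset.prod_congr rfl fun m _ => this m, Finset.prod_mul_distrib]
    simp [Finset.prod_ite_eq']
    norm_num
  rw [hs, hp]

lemma odd_vol (n : ℕ) (i j k l r : Fin n)
    (h : Odd ((if i = r then 1 else 0) + (if j = r then 1 else 0)
      + (if k = r then 1 else 0) + (if l = r then 1 else 0) : ℕ)) :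
    ∫ x in Bset n 1, (x i) * (x j) * (x k) * (x l) = 0 := by
  classical
  set c : Fin n → ℕ := fun m => (if i = m then 1 else 0) + (if j = m then 1 else 0)
      + (if k = m then 1 else 0) + (if l = m then 1 else 0) with hc
  have hmono : ∀ x : Fin n → ℝ, (x i) * (x j) * (x k) * (x l) = ∏ m, (x m) ^ c m := by
    intro x
    simp only [hc, pow_add, Finset.prod_mul_distrib]
    simp [pow_ite, Finset.prod_ite_eq, pow_zero]
  rw [integral_congr_ae (Filter.Eventually.of_forall fun x => hmono x), signed_moment]
  rw [if_neg (by push_neg; exact ⟨r, Nat.not_even_iff_odd.2 h⟩)]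


lemma vol_Bset_pos (n : ℕ) : volume (Bset n 1) ≠ 0 := by
  have hopen : IsOpen {x : Fin n → ℝ | ∑ i, |x i| < 1} :=
    isOpen_lt (by continuity) continuous_const
  have hne : (0 : Fin n → ℝ) ∈ {x : Fin n → ℝ | ∑ i, |x i| < 1} := by
    simp
  have hpos := hopen.measure_pos volume ⟨0, hne⟩
  have hsub : {x : Fin n → ℝ | ∑ i, |x i| < 1} ⊆ Bset n 1 := by
    intro x hx
    simp only [Set.mem_setOf_eq] at hx
    exact le_of_lt hx
  exact (lt_of_lt_of_le hpos (measure_mono hsub)).ne'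

lemma vol_Bset_ne_top (n : ℕ) : volume (Bset n 1) ≠ ⊤ :=
  ((isCompact_Bset n 1).measure_lt_top).ne

theorem stmt_3 (n : ℕ) (hn : 2 ≤ n) (θ : Fin n → ℝ) (hθ : ∑ i, (θ i) ^ 2 = 1)
    (B : Set (Fin n → ℝ)) (hB : B = {x : Fin n → ℝ | ∑ k, |x k| ≤ 1})
    (μ : Measure (Fin n → ℝ)) (hμ : μ = (volume B)⁻¹ • volume.restrict B) :
    (∫ x, (∑ i, θ i * x i) ^ 4 ∂μ)
        = 3 * (∫ x, (x ⟨0, by omega⟩) ^ 2 * (x ⟨1, by omega⟩) ^ 2 ∂μ)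
          + ((∫ x, (x ⟨0, by omega⟩) ^ 4 ∂μ)
              - 3 * (∫ x, (x ⟨0, by omega⟩) ^ 2 * (x ⟨1, by omega⟩) ^ 2 ∂μ))
            * ∑ i, (θ i) ^ 4 ∧
    (∫ x, (x ⟨0, by omega⟩) ^ 4 ∂μ)
        - 3 * (∫ x, (x ⟨0, by omega⟩) ^ 2 * (x ⟨1, by omega⟩) ^ 2 ∂μ)
      = 12 / (((n : ℝ) + 1) * (n + 2) * (n + 3) * (n + 4)) ∧
    0 < (∫ x, (x ⟨0, by omega⟩) ^ 4 ∂μ)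
        - 3 * (∫ x, (x ⟨0, by omega⟩) ^ 2 * (x ⟨1, by omega⟩) ^ 2 ∂μ) := by
  classical
  have hBB : B = Bset n 1 := hB
  subst hBB
  subst hμ
  set i0 : Fin n := ⟨0, by omega⟩ with hi0
  set i1 : Fin n := ⟨1, by omega⟩ with hi1
  have hi01 : i0 ≠ i1 := by
    intro h
    have := congrArg Fin.val h
    simp [hi0, hi1] at this
  set vB : ℝ := (volume (Bset n 1)).toReal with hvBdef
  have hvB : vB = 2 ^ n / (n.factorial : ℝ) := vol_Bset n
  have hvBpos : 0 < vB := by rw [hvB]; positivity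
  set μ0 : Measure (Fin n → ℝ) := (volume (Bset n 1))⁻¹ • volume.restrict (Bset n 1) with hμ0
  have hμint : ∀ g : (Fin n → ℝ) → ℝ,
      ∫ x, g x ∂μ0 = vB⁻¹ * ∫ x in Bset n 1, g x := by
    intro g
    rw [hμ0, integral_smul_measure, ENNReal.toReal_inv, smul_eq_mul]
  set Q : ℝ := ((n : ℝ) + 1) * ((n : ℝ) + 2) * ((n : ℝ) + 3) * ((n : ℝ) + 4) with hQdef
  have hQpos : (0:ℝ) < Q := by positivity
  have hfacN : (n + 4).factorial = (n+4) * ((n+3) * ((n+2) * ((n+1) * n.factorial))) := by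
    rw [show n+4 = n+3+1 from rfl, Nat.factorial_succ, show n+3 = n+2+1 from rfl,
      Nat.factorial_succ, show n+2 = n+1+1 from rfl, Nat.factorial_succ, Nat.factorial_succ]
  have hfacR : (((n + 4).factorial : ℝ)) = Q * (n.factorial : ℝ) := by
    rw [hfacN]; push_cast; ring
  have h2n : (2:ℝ) ^ n ≠ 0 := by positivity
  have hnf : ((n.factorial : ℝ)) ≠ 0 := by positivity
  have harith24 : vB⁻¹ * (2 ^ n * 24 / (((n + 4).factorial : ℝ))) = 24 / Q := by
    rw [hvB, hfacR]; field_simp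
  have harith4 : vB⁻¹ * (2 ^ n * 4 / (((n + 4).factorial : ℝ))) = 4 / Q := by
    rw [hvB, hfacR]; field_simp
  have hE4 : ∫ x, (x i0) ^ 4 ∂μ0 = 24 / Q := by
    rw [hμint, quad_vol, harith24]
  have hE22 : ∫ x, (x i0) ^ 2 * (x i1) ^ 2 ∂μ0 = 4 / Q := by
    rw [hμint, pair_vol n i0 i1 hi01, harith4]
  refine ⟨?_, ?_, ?_⟩
  · -- main expansion
    set M : Fin n → Fin n → Fin n → Fin n → ℝ :=
      fun i j k l => vB⁻¹ * ∫ x in Bset n 1, x i * x j * x k * x l with hM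
    have hM4 : ∀ i, M i i i i = 24 / Q := by
      intro i
      have h1 : ∫ x in Bset n 1, x i * x i * x i * x i = ∫ x in Bset n 1, (x i) ^ 4 :=
        integral_congr_ae (Filter.Eventually.of_forall fun x => by ring)
      rw [hM]
      simp only []
      rw [h1, quad_vol, harith24]
    have hM22 : ∀ i k, i ≠ k → M i i k k = 4 / Q := by
      intro i k hik
      have h1 : ∫ x in Bset n 1, x i * x i * x k * x k
          = ∫ x in Bset n 1, (x i) ^ 2 * (x k) ^ 2 :=
        integral_congr_ae (Filter.Eventually.of_forall fun x => by ring)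
      rw [hM]
      simp only []
      rw [h1, pair_vol n i k hik, harith4]
    have hMcomm : ∀ i j k l i' j' k' l', ({i, j, k, l} : Multiset (Fin n)) = {i', j', k', l'} →
        True := fun _ _ _ _ _ _ _ _ _ => trivial
    have hM22b : ∀ i j, M i j i j = M i i j j := by
      intro i j
      rw [hM]
      simp only []
      congr 1
      exact integral_congr_ae (Filter.Eventually.of_forall fun x => by ring)
    have hM22c : ∀ i j, M i j j i = M i i j j := by
      intro i j
      rw [hM]
      simp only []
      congr 1
      exact integral_congr_ae (Filter.Eventually.of_forall fun x => by ring)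
    have hModd : ∀ i j k l r : Fin n,
        Odd ((if i = r then 1 else 0) + (if j = r then 1 else 0)
          + (if k = r then 1 else 0) + (if l = r then 1 else 0) : ℕ) → M i j k l = 0 := by
      intro i j k l r h
      rw [hM]
      simp only []
      rw [odd_vol n i j k l r h, mul_zero]
    have hMeq : ∀ i j k l, M i j k l
        = (if k = l ∧ j = k ∧ i = j then 24/Q else 0)
        + (if k = l ∧ i = j ∧ ¬ i = k then 4/Q else 0)
        + (if j = l ∧ i = k ∧ ¬ i = j then 4/Q else 0)
        + (if j = k ∧ i = l ∧ ¬ i = j then 4/Q else 0) := by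
      intro i j k l
      by_cases hij : i = j
      · subst hij
        by_cases hik : i = k
        · subst hik
          by_cases hil : i = l
          · subst hil
            simp [hM4 i]
          · have hli : ¬ l = i := fun h => hil h.symm
            rw [hModd i i i l i (by rw [if_pos rfl, if_neg hli]; decide)]
            simp [hil, hli]
        · have hki : ¬ k = i := fun h => hik h.symm
          by_cases hil : i = l
          · subst hil
            rw [hModd i i k i k (by rw [if_neg hik, if_pos rfl]; decide)]
            simp [hik, hki]
          · by_cases hkl : k = l
            · subst hkl
              rw [hM22 i k hik]
              simp [hik, hki, hil]
            · have hlk : ¬ l = k := fun h => hkl h.symm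
              rw [hModd i i k l k (by rw [if_neg hik, if_pos rfl, if_neg hlk]; decide)]
              simp [hik, hki, hil, hkl, hlk]
      · have hji : ¬ j = i := fun h => hij h.symm
        by_cases hik : i = k
        · subst hik
          by_cases hjl : j = l
          · subst hjl
            rw [hM22b i j, hM22 i j hij]
            simp [hij, hji]
          · have hlj : ¬ l = j := fun h => hjl h.symm
            rw [hModd i j i l j (by rw [if_neg hij, if_pos rfl, if_neg hlj]; decide)]
            simp [hij, hji, hjl, hlj]
        · have hki : ¬ k = i := fun h => hik h.symm
          by_cases hil : i = l
          · subst hil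
            by_cases hjk : j = k
            · subst hjk
              rw [hM22c i j, hM22 i j hij]
              simp [hij, hji]
            · have hkj : ¬ k = j := fun h => hjk h.symm
              rw [hModd i j k i j (by rw [if_neg hij, if_pos rfl, if_neg hkj]; decide)]
              simp [hij, hji, hik, hki, hjk, hkj]
          · have hli : ¬ l = i := fun h => hil h.symm
            rw [hModd i j k l i (by rw [if_pos rfl, if_neg hji, if_neg hki, if_neg hli]; decide)]
            simp [hij, hji, hik, hki, hil, hli]
    -- integrability
    have hvolinv : (volume (Bset n 1))⁻¹ ≠ ⊤ := by
      rw [ENNReal.inv_ne_top]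
      exact vol_Bset_pos n
    have hmint : ∀ i j k l : Fin n, Integrable
        (fun x : Fin n → ℝ => θ i * θ j * θ k * θ l * (x i * x j * x k * x l)) μ0 := by
      intro i j k l
      rw [hμ0]
      refine Integrable.smul_measure ?_ hvolinv
      exact integrableOn_Bset (continuous_const.mul
        ((((continuous_apply i).mul (continuous_apply j)).mul (continuous_apply k)).mul
          (continuous_apply l))) 1
    have hexp : ∫ x, (∑ i, θ i * x i) ^ 4 ∂μ0
        = ∑ i, ∑ j, ∑ k, ∑ l, θ i * θ j * θ k * θ l * M i j k l := by
      have h1 : ∀ x : Fin n → ℝ, (∑ i, θ i * x i) ^ 4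
          = ∑ i, ∑ j, ∑ k, ∑ l, θ i * θ j * θ k * θ l * (x i * x j * x k * x l) := by
        intro x
        calc (∑ i, θ i * x i) ^ 4
            = (∑ i, θ i * x i) * ((∑ j, θ j * x j) * ((∑ k, θ k * x k) * (∑ l, θ l * x l))) := by
              ring
          _ = _ := by
              simp only [Finset.sum_mul, Finset.mul_sum]
              refine Finset.sum_congr rfl fun i _ => ?_
              refine Finset.sum_congr rfl fun j _ => ?_
              refine Finset.sum_congr rfl fun k _ => ?_
              refine Finset.sum_congr rfl fun l _ => ?_
              ring
      rw [integral_congr_ae (Filter.Eventually.of_forall h1)]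
      rw [integral_finset_sum _ (fun i _ => integrable_finset_sum _ (fun j _ =>
        integrable_finset_sum _ (fun k _ => integrable_finset_sum _ (fun l _ => hmint i j k l))))]
      refine Finset.sum_congr rfl fun i _ => ?_
      rw [integral_finset_sum _ (fun j _ => integrable_finset_sum _ (fun k _ =>
        integrable_finset_sum _ (fun l _ => hmint i j k l)))]
      refine Finset.sum_congr rfl fun j _ => ?_
      rw [integral_finset_sum _ (fun k _ => integrable_finset_sum _ (fun l _ => hmint i j k l))]
      refine Finset.sum_congr rfl fun k _ => ?_
      rw [integral_finset_sum _ (fun l _ => hmint i j k l)]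
      refine Finset.sum_congr rfl fun l _ => ?_
      rw [integral_const_mul, hμint, hM]
    rw [hexp, hE4, hE22]
    have hoff : ∑ i, ∑ k, (if i = k then (0:ℝ) else θ i ^ 2 * θ k ^ 2)
        = 1 - ∑ i, θ i ^ 4 := by
      have h1 : ∀ i, ∑ k, (if i = k then (0:ℝ) else θ i ^ 2 * θ k ^ 2)
          = θ i ^ 2 * (∑ k, θ k ^ 2) - θ i ^ 4 := by
        intro i
        have h2 : ∀ k, (if i = k then (0:ℝ) else θ i ^ 2 * θ k ^ 2)
            = θ i ^ 2 * θ k ^ 2 - (if i = k then θ i ^ 2 * θ k ^ 2 else 0) := by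
          intro k; by_cases h : i = k <;> simp [h]
        rw [Finset.sum_congr rfl fun k _ => h2 k, Finset.sum_sub_distrib,
          Finset.sum_ite_eq Finset.univ i (fun k => θ i ^ 2 * θ k ^ 2),
          if_pos (Finset.mem_univ i), ← Finset.mul_sum]
        ring
      rw [Finset.sum_congr rfl fun i _ => h1 i, Finset.sum_sub_distrib, ← Finset.sum_mul, hθ]
      ring
    simp only [hMeq, mul_add, Finset.sum_add_distrib, mul_ite, mul_zero, ite_and,
      Finset.sum_ite_irrel, Finset.sum_const_zero, Finset.sum_ite_eq, Finset.mem_univ, if_true]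
    have e1 : ∑ x : Fin n, θ x * θ x * θ x * θ x * (24 / Q)
        = (∑ x : Fin n, θ x ^ 4) * (24 / Q) := by
      rw [Finset.sum_mul]
      exact Finset.sum_congr rfl fun x _ => by ring
    have key2 : ∀ f : Fin n → Fin n → ℝ, (∀ x y, ¬ x = y → f x y = θ x ^ 2 * θ y ^ 2 * (4/Q)) →
        ∑ x : Fin n, ∑ y : Fin n, (if ¬ x = y then f x y else 0)
          = (1 - ∑ i : Fin n, θ i ^ 4) * (4 / Q) := by
      intro f hf
      have h1 : ∀ x y : Fin n, (if ¬ x = y then f x y else 0)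
          = (if x = y then 0 else θ x ^ 2 * θ y ^ 2) * (4 / Q) := by
        intro x y
        by_cases h : x = y
        · simp [h]
        · rw [if_neg h, if_pos h, hf x y h]
      calc ∑ x : Fin n, ∑ y : Fin n, (if ¬ x = y then f x y else 0)
          = ∑ x : Fin n, ∑ y : Fin n, (if x = y then 0 else θ x ^ 2 * θ y ^ 2) * (4 / Q) :=
            Finset.sum_congr rfl fun x _ => Finset.sum_congr rfl fun y _ => h1 x y
        _ = (∑ x : Fin n, ∑ y : Fin n, if x = y then 0 else θ x ^ 2 * θ y ^ 2) * (4 / Q) := by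
            rw [Finset.sum_mul]
            exact Finset.sum_congr rfl fun x _ => (Finset.sum_mul _ _ _).symm
        _ = (1 - ∑ i : Fin n, θ i ^ 4) * (4 / Q) := by rw [hoff]
    have e2 := key2 (fun x y => θ x * θ x * θ y * θ y * (4/Q)) (fun x y _ => by ring)
    have e3 := key2 (fun x y => θ x * θ y * θ x * θ y * (4/Q)) (fun x y _ => by ring)
    have e4 := key2 (fun x y => θ x * θ y * θ y * θ x * (4/Q)) (fun x y _ => by ring)
    rw [e1, e2, e3, e4]
    ring
  · rw [hE4, hE22]
    rw [hQdef]
    ring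
  · rw [hE4, hE22]
    have : (24:ℝ)/Q - 3 * (4/Q) = 12/Q := by ring
    rw [this]
    positivity
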